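/- Let w₁, w₂ ∈ ℝ^d be nonzero with angle r between them, and suppose the classification thresholds are chosen so that the class half-angles satisfy θ¹, θ² < r/4, where θⁱ = arccos(k_th^i/(√d·‖wᵢ‖)). Then for any x_r in class 1 (i.e., x_r·w₁ > k_th¹, ‖x_r‖² = d) and x_s in class 2 (x_s·w₂ > k_th², ‖x_s‖² = d), we have x_r·x_s ≤ d·cos(2θ*) where θ* = max(θ¹, θ²). -/

import Mathlib

open InnerProductGeometry

variable {V : Type*} [NormedAddCommGroup V] [InnerProductSpace ℝ V]

lemma cos_add_le_inner_of_unit {u v w : V} (hu : ‖u‖ = 1) (hv : ‖v‖ = 1) (hw : ‖w‖ = 1) :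
    Real.cos (angle u v + angle v w) ≤ (inner ℝ u w : ℝ) := by
  set α := angle u v with hα
  set β := angle v w with hβ
  have hcα : Real.cos α = (inner ℝ u v : ℝ) := by
    have := cos_angle_mul_norm_mul_norm u v
    rw [hu, hv] at this; simpa using this
  have hcβ : Real.cos β = (inner ℝ v w : ℝ) := by
    have := cos_angle_mul_norm_mul_norm v w
    rw [hv, hw] at this; simpa using this
  set p := u - Real.cos α • v with hp
  set q := w - Real.cos β • v with hq
  have hpv : (inner ℝ p v : ℝ) = 0 := by
    rw [hp, inner_sub_left, real_inner_smul_left, real_inner_self_eq_norm_sq, hv, ← hcα]; ring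
  have hqv : (inner ℝ q v : ℝ) = 0 := by
    rw [hq, inner_sub_left, real_inner_smul_left, real_inner_self_eq_norm_sq, hv,
      real_inner_comm v w, ← hcβ]; ring
  have hsinα : Real.sin α ≥ 0 := Real.sin_nonneg_of_nonneg_of_le_pi (angle_nonneg _ _) (angle_le_pi _ _)
  have hsinβ : Real.sin β ≥ 0 := Real.sin_nonneg_of_nonneg_of_le_pi (angle_nonneg _ _) (angle_le_pi _ _)
  have hnp : ‖p‖ = Real.sin α := by
    have h2 : ‖p‖ ^ 2 = Real.sin α ^ 2 := by
      rw [hp, norm_sub_sq_real, real_inner_smul_right, norm_smul, hu, hv, ← hcα,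
        Real.norm_eq_abs, mul_one, Real.sin_sq, sq_abs]
      ring
    nlinarith [norm_nonneg p, hsinα]
  have hnq : ‖q‖ = Real.sin β := by
    have h2 : ‖q‖ ^ 2 = Real.sin β ^ 2 := by
      rw [hq, norm_sub_sq_real, real_inner_smul_right, norm_smul, hw, hv, real_inner_comm v w, ← hcβ,
        Real.norm_eq_abs, mul_one, Real.sin_sq, sq_abs]
      ring
    nlinarith [norm_nonneg q, hsinβ]
  have hpq : -(Real.sin α * Real.sin β) ≤ (inner ℝ p q : ℝ) := by
    have := abs_real_inner_le_norm p q
    rw [hnp, hnq] at this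
    cases abs_le.1 this with
    | intro h1 h2 => linarith
  have hexp : (inner ℝ u w : ℝ) = (inner ℝ p q : ℝ) + Real.cos α * Real.cos β := by
    have hu' : u = p + Real.cos α • v := by simp [hp]
    have hw' : w = q + Real.cos β • v := by simp [hq]
    rw [hu', hw']
    simp only [inner_add_left, inner_add_right, real_inner_smul_left, real_inner_smul_right,
      real_inner_self_eq_norm_sq, hv, hpv]
    rw [real_inner_comm q v, hqv]
    ring
  rw [Real.cos_add, hexp]
  linarith

lemma angle_triangle_aux {x y z : V} (hx : x ≠ 0) (hy : y ≠ 0) (hz : z ≠ 0) :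
    angle x z ≤ angle x y + angle y z := by
  set u := ‖x‖⁻¹ • x with hu
  set v := ‖y‖⁻¹ • y with hv
  set w := ‖z‖⁻¹ • z with hw
  have hxn : (0:ℝ) < ‖x‖ := norm_pos_iff.2 hx
  have hyn : (0:ℝ) < ‖y‖ := norm_pos_iff.2 hy
  have hzn : (0:ℝ) < ‖z‖ := norm_pos_iff.2 hz
  have hnu : ‖u‖ = 1 := by rw [hu, norm_smul]; simp [abs_of_pos (inv_pos.2 hxn), inv_mul_cancel₀ hxn.ne']
  have hnv : ‖v‖ = 1 := by rw [hv, norm_smul]; simp [abs_of_pos (inv_pos.2 hyn), inv_mul_cancel₀ hyn.ne']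
  have hnw : ‖w‖ = 1 := by rw [hw, norm_smul]; simp [abs_of_pos (inv_pos.2 hzn), inv_mul_cancel₀ hzn.ne']
  have e1 : angle u v = angle x y := by
    rw [hu, hv, angle_smul_left_of_pos _ _ (inv_pos.2 hxn), angle_smul_right_of_pos _ _ (inv_pos.2 hyn)]
  have e2 : angle v w = angle y z := by
    rw [hv, hw, angle_smul_left_of_pos _ _ (inv_pos.2 hyn), angle_smul_right_of_pos _ _ (inv_pos.2 hzn)]
  have e3 : angle u w = angle x z := by
    rw [hu, hw, angle_smul_left_of_pos _ _ (inv_pos.2 hxn), angle_smul_right_of_pos _ _ (inv_pos.2 hzn)]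
  rw [← e1, ← e2, ← e3]
  by_cases hπ : Real.pi ≤ angle u v + angle v w
  · exact (angle_le_pi u w).trans hπ
  push_neg at hπ
  by_contra hcon
  push_neg at hcon
  have hkey := cos_add_le_inner_of_unit hnu hnv hnw
  have hcuw : Real.cos (angle u w) = (inner ℝ u w : ℝ) := by
    have := cos_angle_mul_norm_mul_norm u w
    rw [hnu, hnw] at this; simpa using this
  have : Real.cos (angle u w) < Real.cos (angle u v + angle v w) :=
    Real.cos_lt_cos_of_nonneg_of_le_pi
      (by linarith [angle_nonneg u v, angle_nonneg v w]) (angle_le_pi u w) hcon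
  linarith [hcuw ▸ hkey]

theorem stmt_1 (d : ℕ) (hd : 0 < d) (w₁ w₂ : EuclideanSpace ℝ (Fin d))
    (hw₁ : w₁ ≠ 0) (hw₂ : w₂ ≠ 0)
    (kth₁ kth₂ : ℝ)
    (hk₁ : kth₁ ∈ Set.Ioo 0 (Real.sqrt d * ‖w₁‖))
    (hk₂ : kth₂ ∈ Set.Ioo 0 (Real.sqrt d * ‖w₂‖))
    (θ₁ θ₂ : ℝ)
    (hθ₁ : θ₁ = Real.arccos (kth₁ / (Real.sqrt d * ‖w₁‖)))
    (hθ₂ : θ₂ = Real.arccos (kth₂ / (Real.sqrt d * ‖w₂‖)))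
    (hr₁ : θ₁ < angle w₁ w₂ / 4) (hr₂ : θ₂ < angle w₁ w₂ / 4) :
    ∀ xr xs : EuclideanSpace ℝ (Fin d),
      ‖xr‖ ^ 2 = (d : ℝ) → ‖xs‖ ^ 2 = (d : ℝ) →
      kth₁ < (inner ℝ xr w₁ : ℝ) → kth₂ < (inner ℝ xs w₂ : ℝ) →
      (inner ℝ xr xs : ℝ) ≤ (d : ℝ) * Real.cos (2 * max θ₁ θ₂) := by
  intro xr xs hxr hxs h1 h2
  have hd' : (0:ℝ) < (d : ℝ) := by exact_mod_cast hd
  have hsd : (0:ℝ) < Real.sqrt d := Real.sqrt_pos.2 hd'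
  have hnr : ‖xr‖ = Real.sqrt d := by
    rw [← Real.sqrt_sq (norm_nonneg xr), hxr]
  have hns : ‖xs‖ = Real.sqrt d := by
    rw [← Real.sqrt_sq (norm_nonneg xs), hxs]
  have hxr0 : xr ≠ 0 := by
    intro h; rw [h] at hnr; simp at hnr; linarith
  have hxs0 : xs ≠ 0 := by
    intro h; rw [h] at hns; simp at hns; linarith
  have hw₁n : (0:ℝ) < ‖w₁‖ := norm_pos_iff.2 hw₁
  have hw₂n : (0:ℝ) < ‖w₂‖ := norm_pos_iff.2 hw₂
  -- θ₁ bounds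
  have hc₁ : kth₁ / (Real.sqrt d * ‖w₁‖) ∈ Set.Ioo (0:ℝ) 1 := by
    constructor
    · exact div_pos hk₁.1 (mul_pos hsd hw₁n)
    · rw [div_lt_one (mul_pos hsd hw₁n)]; exact hk₁.2
  have hc₂ : kth₂ / (Real.sqrt d * ‖w₂‖) ∈ Set.Ioo (0:ℝ) 1 := by
    constructor
    · exact div_pos hk₂.1 (mul_pos hsd hw₂n)
    · rw [div_lt_one (mul_pos hsd hw₂n)]; exact hk₂.2
  have hcosθ₁ : Real.cos θ₁ = kth₁ / (Real.sqrt d * ‖w₁‖) := by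
    rw [hθ₁, Real.cos_arccos (by linarith [hc₁.1]) hc₁.2.le]
  have hcosθ₂ : Real.cos θ₂ = kth₂ / (Real.sqrt d * ‖w₂‖) := by
    rw [hθ₂, Real.cos_arccos (by linarith [hc₂.1]) hc₂.2.le]
  have hθ₁0 : 0 ≤ θ₁ := hθ₁ ▸ Real.arccos_nonneg _
  have hθ₂0 : 0 ≤ θ₂ := hθ₂ ▸ Real.arccos_nonneg _
  -- angle xr w₁ < θ₁
  have hcos1 : Real.cos (angle xr w₁) = (inner ℝ xr w₁ : ℝ) / (Real.sqrt d * ‖w₁‖) := by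
    rw [cos_angle, hnr]
  have hang1 : angle xr w₁ < θ₁ := by
    by_contra hcon
    push_neg at hcon
    have hle : Real.cos (angle xr w₁) ≤ Real.cos θ₁ :=
      Real.cos_le_cos_of_nonneg_of_le_pi hθ₁0 (angle_le_pi _ _) hcon
    rw [hcos1, hcosθ₁] at hle
    have := (div_le_div_iff_of_pos_right (mul_pos hsd hw₁n)).1 hle
    linarith
  have hcos2 : Real.cos (angle xs w₂) = (inner ℝ xs w₂ : ℝ) / (Real.sqrt d * ‖w₂‖) := by
    rw [cos_angle, hns]
  have hang2 : angle xs w₂ < θ₂ := by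
    by_contra hcon
    push_neg at hcon
    have hle : Real.cos (angle xs w₂) ≤ Real.cos θ₂ :=
      Real.cos_le_cos_of_nonneg_of_le_pi hθ₂0 (angle_le_pi _ _) hcon
    rw [hcos2, hcosθ₂] at hle
    have := (div_le_div_iff_of_pos_right (mul_pos hsd hw₂n)).1 hle
    linarith
  -- triangle inequalities
  have ht1 : angle w₁ w₂ ≤ angle w₁ xr + angle xr w₂ := angle_triangle_aux hw₁ hxr0 hw₂
  have ht2 : angle xr w₂ ≤ angle xr xs + angle xs w₂ := angle_triangle_aux hxr0 hxs0 hw₂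
  have hcomm : angle w₁ xr = angle xr w₁ := angle_comm _ _
  have hlow : angle w₁ w₂ - θ₁ - θ₂ < angle xr xs := by
    rw [hcomm] at ht1
    linarith
  set m := max θ₁ θ₂ with hm
  have hmlt : m < angle w₁ w₂ / 4 := max_lt hr₁ hr₂
  have hm0 : 0 ≤ m := le_max_of_le_left hθ₁0
  have h2m : 2 * m ≤ angle xr xs := by
    have hθ₁m : θ₁ ≤ m := le_max_left _ _
    have hθ₂m : θ₂ ≤ m := le_max_right _ _
    linarith
  have hcosle : Real.cos (angle xr xs) ≤ Real.cos (2 * m) :=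
    Real.cos_le_cos_of_nonneg_of_le_pi (by linarith) (angle_le_pi _ _) h2m
  have hin : (inner ℝ xr xs : ℝ) = Real.cos (angle xr xs) * (d : ℝ) := by
    have := cos_angle_mul_norm_mul_norm xr xs
    rw [hnr, hns, Real.mul_self_sqrt hd'.le] at this
    linarith
  rw [hin]
  calc Real.cos (angle xr xs) * (d : ℝ) ≤ Real.cos (2 * m) * (d : ℝ) :=
        mul_le_mul_of_nonneg_right hcosle hd'.le
    _ = (d : ℝ) * Real.cos (2 * m) := mul_comm _ _
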